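/- Let 1 ≤ j ≤ n be integers. Then for every v ∈ ℂ, Σ_{k=j}^{n} (−1)^{k+n} (2n/(n+k)) binom(n+k, n−k) binom(2k, k−j) v^k = v^j [ P_{n−j}^{(0,2j)}(2v−1) − P_{n−1−j}^{(0,2j)}(2v−1) ], with the convention P_{−1}^{(0,2j)} := 0. -/

import Mathlib

open scoped BigOperators

/-- Pochhammer symbol `(a)_k = a(a+1)⋯(a+k-1)` over ℂ. -/
noncomputable def pochC (a : ℂ) (k : ℕ) : ℂ := ∏ i ∈ Finset.range k, (a + i)

/-- Jacobi polynomial `P_n^{(a,b)}(x)`. -/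
noncomputable def Jac (a b : ℝ) (n : ℕ) (x : ℂ) : ℂ :=
  (pochC ((a : ℂ) + 1) n / (n.factorial : ℂ)) * ∑ k ∈ Finset.range (n + 1),
    pochC (-(n : ℂ)) k * pochC ((n : ℂ) + a + b + 1) k /
      (pochC ((a : ℂ) + 1) k * (k.factorial : ℂ)) * ((1 - x) / 2) ^ k

lemma pochC_one (m : ℕ) : pochC 1 m = m.factorial := by
  induction m with
  | zero => simp [pochC]
  | succ m ih =>
    rw [pochC, Finset.prod_range_succ, ← pochC, ih, Nat.factorial_succ]
    push_cast; ring

lemma pochC_cast_add_one (N k : ℕ) :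
    (N.factorial : ℂ) * pochC ((N : ℂ) + 1) k = ((N + k).factorial : ℂ) := by
  induction k with
  | zero => simp [pochC]
  | succ k ih =>
    rw [pochC, Finset.prod_range_succ, ← pochC, ← mul_assoc, ih,
      show N + (k+1) = (N + k) + 1 by ring, Nat.factorial_succ]
    push_cast; ring

lemma pochC_neg_nat (m k : ℕ) (hk : k ≤ m) :
    pochC (-(m : ℂ)) k * ((m - k).factorial : ℂ) = (-1 : ℂ) ^ k * m.factorial := by
  induction k with
  | zero => simp [pochC]
  | succ k ih =>
    have hk' : k ≤ m := by omega
    have h1 : m - k = (m - (k+1)) + 1 := by omega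
    rw [pochC, Finset.prod_range_succ, ← pochC]
    have := ih hk'
    rw [h1, Nat.factorial_succ] at this
    push_cast [Nat.cast_sub hk, Nat.cast_sub hk'] at this ⊢
    have hmk : ((m : ℂ) - (k+1) + 1) = (m : ℂ) - k := by ring
    have hne : ((m : ℂ) - k) ≠ 0 := by
      have : (k : ℂ) ≠ (m : ℂ) := by exact_mod_cast (by omega : k ≠ m)
      intro h; exact this (sub_eq_zero.mp h).symm
    calc pochC (-(m:ℂ)) k * (-(m:ℂ) + (k:ℂ)) * ((m - (k+1) : ℕ).factorial : ℂ)
        = (pochC (-(m:ℂ)) k * (((m:ℂ) - (k+1) + 1) * ((m - (k+1) : ℕ).factorial : ℂ))) * (-(m:ℂ)+k) / ((m:ℂ)-k) := by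
          rw [hmk]; field_simp
      _ = ((-1:ℂ)^k * m.factorial) * (-(m:ℂ)+k) / ((m:ℂ)-k) := by rw [this]
      _ = (-1:ℂ)^(k+1) * m.factorial := by
          field_simp [pow_succ]; ring

lemma jac_expand (j m : ℕ) (v : ℂ) :
    Jac 0 (2 * j) m (2 * v - 1) =
      ∑ k ∈ Finset.range (m+1),
        (-1:ℂ)^k * (m.choose k) * ((m+2*j+k).choose k) * (1-v)^k := by
  rw [Jac]
  have h0 : (((0:ℝ)) : ℂ) + 1 = 1 := by norm_num
  rw [h0, pochC_one, div_self (by exact_mod_cast m.factorial_ne_zero), one_mul]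
  refine Finset.sum_congr rfl fun k hk => ?_
  have hkm : k ≤ m := by simpa [Nat.lt_succ_iff] using Finset.mem_range.mp hk
  have harg : (m : ℂ) + ((0:ℝ):ℂ) + (((2 * (j:ℝ)):ℝ):ℂ) + 1 = ((m + 2*j : ℕ) : ℂ) + 1 := by
    push_cast; ring
  rw [harg, pochC_one]
  have hx : (1 - (2*v - 1))/2 = 1 - v := by ring
  rw [hx]
  have A := pochC_neg_nat m k hkm
  have B := pochC_cast_add_one (m + 2*j) k
  have C1 : ((m.choose k : ℂ)) * k.factorial * ((m-k).factorial : ℂ) = (m.factorial : ℂ) := by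
    exact_mod_cast congrArg (Nat.cast : ℕ → ℂ) (Nat.choose_mul_factorial_mul_factorial hkm)
  have C2 : (((m+2*j+k).choose k : ℂ)) * k.factorial * ((m+2*j).factorial : ℂ)
      = ((m+2*j+k).factorial : ℂ) := by
    have h := Nat.choose_mul_factorial_mul_factorial (Nat.le_add_left k (m+2*j))
    rw [Nat.add_sub_cancel_right] at h
    exact_mod_cast congrArg (Nat.cast : ℕ → ℂ) h
  have hfk : (k.factorial : ℂ) ≠ 0 := by exact_mod_cast k.factorial_ne_zero
  have hfmk : ((m-k).factorial : ℂ) ≠ 0 := by exact_mod_cast (m-k).factorial_ne_zero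
  have hfmj : ((m+2*j).factorial : ℂ) ≠ 0 := by exact_mod_cast (m+2*j).factorial_ne_zero
  have hP : pochC (-(m:ℂ)) k = (-1:ℂ)^k * m.factorial / (m-k).factorial := by
    rw [eq_div_iff hfmk]; exact A
  have hQ : pochC (((m+2*j : ℕ):ℂ) + 1) k = ((m+2*j+k).factorial : ℂ) / ((m+2*j).factorial : ℂ) := by
    rw [eq_div_iff hfmj, mul_comm]; exact B
  rw [hP, hQ, ← C1, ← C2]
  field_simp

lemma altV (R : ℕ) : ∀ (M N : ℕ), M ≤ R →
    ∑ s ∈ Finset.range (M+1), (-1:ℤ)^s * (M.choose s : ℤ) * ((N+s).choose R : ℤ)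
      = (-1:ℤ)^M * (N.choose (R - M) : ℤ) := by
  intro M
  induction M with
  | zero => intro N h; simp
  | succ M ih =>
    intro N h
    have hM : M ≤ R := by omega
    have e1 := ih N hM
    have e2 := ih (N+1) hM
    rw [Finset.sum_range_succ']
    have hsplit : ∀ s ∈ Finset.range (M+1),
        (-1:ℤ)^(s+1) * ((M+1).choose (s+1) : ℤ) * ((N+(s+1)).choose R : ℤ)
        = (-((-1:ℤ)^s * (M.choose s : ℤ) * (((N+1)+s).choose R : ℤ)))
          + ((-1:ℤ)^(s+1) * (M.choose (s+1) : ℤ) * ((N+(s+1)).choose R : ℤ)) := by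
      intro s _
      have : ((M+1).choose (s+1) : ℤ) = (M.choose s : ℤ) + (M.choose (s+1) : ℤ) := by
        exact_mod_cast Nat.choose_succ_succ M s
      rw [this, show N+(s+1) = (N+1)+s by ring]
      ring
    rw [Finset.sum_congr rfl hsplit, Finset.sum_add_distrib]
    have hT1 : ∑ s ∈ Finset.range (M+1),
        (-((-1:ℤ)^s * (M.choose s : ℤ) * (((N+1)+s).choose R : ℤ)))
        = -((-1:ℤ)^M * ((N+1).choose (R - M) : ℤ)) := by
      rw [← e2, ← Finset.sum_neg_distrib]
    have hT2 : ∑ s ∈ Finset.range (M+1),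
        (-1:ℤ)^(s+1) * (M.choose (s+1) : ℤ) * ((N+(s+1)).choose R : ℤ)
        = (-1:ℤ)^M * (N.choose (R - M) : ℤ) - (N.choose R : ℤ) := by
      have : ∑ s ∈ Finset.range (M+1),
          (-1:ℤ)^(s+1) * (M.choose (s+1) : ℤ) * ((N+(s+1)).choose R : ℤ)
          = ∑ s ∈ Finset.range M,
          (-1:ℤ)^(s+1) * (M.choose (s+1) : ℤ) * ((N+(s+1)).choose R : ℤ) := by
        rw [Finset.sum_range_succ, Nat.choose_succ_self]
        simp
      rw [this]
      have := Finset.sum_range_succ' (fun s => (-1:ℤ)^s * (M.choose s : ℤ) * ((N+s).choose R : ℤ)) M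
      rw [this] at e1
      simp only [pow_zero, Nat.choose_zero_right, Nat.cast_one, one_mul, add_zero] at e1
      linarith [e1]
    rw [hT1, hT2]
    have hP : ((N+1).choose (R-M) : ℤ) = (N.choose (R-(M+1)) : ℤ) + (N.choose (R-M) : ℤ) := by
      have h1 : R - M = (R - (M+1)) + 1 := by omega
      rw [h1]
      exact_mod_cast Nat.choose_succ_succ N (R-(M+1))
    rw [hP]
    simp only [pow_zero, Nat.choose_zero_right, Nat.cast_one, one_mul, add_zero, pow_succ]
    ring

lemma sumG (j m i : ℕ) (hi : i ≤ m) :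
    ∑ k ∈ Finset.range (m+1),
        (-1:ℤ)^k * (m.choose k : ℤ) * ((m+2*j+k).choose k : ℤ) * (k.choose i : ℤ)
      = (-1:ℤ)^m * (m.choose i : ℤ) * ((m+2*j+i).choose m : ℤ) := by
  -- restrict to k ≥ i
  rw [show Finset.range (m+1) = Finset.Ico 0 (m+1) by rw [Finset.range_eq_Ico]]
  rw [← Finset.sum_Ico_consecutive _ (Nat.zero_le i) (by omega : i ≤ m+1)]
  have hzero : ∑ k ∈ Finset.Ico 0 i,
      (-1:ℤ)^k * (m.choose k : ℤ) * ((m+2*j+k).choose k : ℤ) * (k.choose i : ℤ) = 0 := by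
    apply Finset.sum_eq_zero
    intro k hk
    have : k < i := (Finset.mem_Ico.mp hk).2
    rw [Nat.choose_eq_zero_of_lt this]
    simp
  rw [hzero, zero_add, Finset.sum_Ico_eq_sum_range]
  have hlen : m + 1 - i = (m - i) + 1 := by omega
  rw [hlen]
  have hterm : ∀ s ∈ Finset.range ((m-i)+1),
      (-1:ℤ)^(i+s) * (m.choose (i+s) : ℤ) * ((m+2*j+(i+s)).choose (i+s) : ℤ) * ((i+s).choose i : ℤ)
      = ((-1:ℤ)^i * (m.choose i : ℤ)) *
        ((-1:ℤ)^s * ((m-i).choose s : ℤ) * (((m+2*j+i)+s).choose (m+2*j) : ℤ)) := by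
    intro s hs
    have hs' : s ≤ m - i := by simpa [Nat.lt_succ_iff] using Finset.mem_range.mp hs
    have h1 : (m.choose (i+s)) * ((i+s).choose i) = m.choose i * (m-i).choose s := by
      have := Nat.choose_mul (n := m) (show i ≤ i+s by omega)
      simpa [Nat.add_sub_cancel_left] using this
    have h2 : (m+2*j+(i+s)).choose (i+s) = ((m+2*j+i)+s).choose (m+2*j) := by
      have hsym := Nat.choose_symm (show i+s ≤ m+2*j+(i+s) by omega)
      rw [show m+2*j+(i+s) - (i+s) = m+2*j by omega] at hsym
      rw [← hsym]
      congr 1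
      ring
    have h1' : (m.choose (i+s) : ℤ) * ((i+s).choose i : ℤ) = (m.choose i : ℤ) * ((m-i).choose s : ℤ) := by
      exact_mod_cast h1
    rw [h2, pow_add]
    linear_combination ((-1:ℤ)^i * (-1:ℤ)^s * ((m+2*j+i+s).choose (m+2*j) : ℤ)) * h1'
  rw [Finset.sum_congr rfl hterm, ← Finset.mul_sum, altV (m+2*j) (m-i) (m+2*j+i) (by omega)]
  have h4 : m + 2*j - (m - i) = 2*j + i := by omega
  have h5 : (m+2*j+i).choose (2*j+i) = (m+2*j+i).choose m := by
    rw [← Nat.choose_symm (show 2*j+i ≤ m+2*j+i by omega), show m+2*j+i-(2*j+i) = m by omega]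
  rw [h4, h5]
  have h6 : ((-1:ℤ)^i) * ((-1:ℤ)^(m-i)) = (-1:ℤ)^m := by
    rw [← pow_add]; congr 1; omega
  linear_combination ((m.choose i : ℤ) * ((m+2*j+i).choose m : ℤ)) * h6

lemma jac_coeff (j m : ℕ) (v : ℂ) :
    Jac 0 (2 * j) m (2 * v - 1) =
      ∑ i ∈ Finset.range (m+1),
        (-1:ℂ)^(m+i) * (m.choose i) * ((m+2*j+i).choose m) * v^i := by
  rw [jac_expand]
  have step1 : ∀ k ∈ Finset.range (m+1),
      (-1:ℂ)^k * (m.choose k) * ((m+2*j+k).choose k) * (1-v)^k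
      = ∑ i ∈ Finset.range (m+1),
          (-1:ℂ)^k * (m.choose k) * ((m+2*j+k).choose k) * (k.choose i) * (-v)^i := by
    intro k hk
    have hexp : (1-v)^k = ∑ i ∈ Finset.range (k+1), (k.choose i : ℂ) * (-v)^i := by
      rw [show (1:ℂ)-v = -v + 1 by ring, add_pow]
      exact Finset.sum_congr rfl fun i _ => by rw [one_pow]; ring
    have hext : (1-v)^k = ∑ i ∈ Finset.range (m+1), (k.choose i : ℂ) * (-v)^i := by
      rw [hexp]
      apply Finset.sum_subset
      · intro x hx
        simp only [Finset.mem_range] at hx ⊢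
        have : k ≤ m := by simpa [Nat.lt_succ_iff] using Finset.mem_range.mp hk
        omega
      · intro x _ hx
        have : k < x := by
          simp only [Finset.mem_range, not_lt] at hx
          omega
        simp [Nat.choose_eq_zero_of_lt this]
    rw [hext, Finset.mul_sum]
    exact Finset.sum_congr rfl fun i _ => by ring
  rw [Finset.sum_congr rfl step1, Finset.sum_comm]
  refine Finset.sum_congr rfl fun i hi => ?_
  have him : i ≤ m := by simpa [Nat.lt_succ_iff] using Finset.mem_range.mp hi
  have hg := sumG j m i him
  have hgC : ∑ k ∈ Finset.range (m+1),
      (-1:ℂ)^k * (m.choose k) * ((m+2*j+k).choose k) * (k.choose i)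
      = (-1:ℂ)^m * (m.choose i) * ((m+2*j+i).choose m) := by
    have := congrArg (Int.cast : ℤ → ℂ) hg
    push_cast at this
    convert this using 2
  calc ∑ k ∈ Finset.range (m+1),
        (-1:ℂ)^k * (m.choose k) * ((m+2*j+k).choose k) * (k.choose i) * (-v)^i
      = (∑ k ∈ Finset.range (m+1),
        (-1:ℂ)^k * (m.choose k) * ((m+2*j+k).choose k) * (k.choose i)) * (-v)^i := by
        rw [Finset.sum_mul]
    _ = (-1:ℂ)^m * (m.choose i) * ((m+2*j+i).choose m) * (-v)^i := by rw [hgC]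
    _ = (-1:ℂ)^(m+i) * (m.choose i) * ((m+2*j+i).choose m) * v^i := by
        rw [pow_add, neg_pow]; ring

lemma keyQ (j i d : ℕ) :
    2*((j:ℚ)+i+d+1) * ((2*j+2*i+d+1).choose (d+1) : ℚ) * ((2*j+2*i).choose i : ℚ)
    = (2*(j:ℚ)+2*i+d+1) * (((i+d+1).choose i : ℚ) * ((2*j+2*i+d+1).choose (i+d+1) : ℚ)
        + ((i+d).choose i : ℚ) * ((2*j+2*i+d).choose (i+d) : ℚ)) := by
  have c1 : ((2*j+2*i+d+1).choose (d+1) : ℚ)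
      = ((2*j+2*i+d+1).factorial : ℚ) / ((d+1).factorial * ((2*j+2*i).factorial)) := by
    rw [Nat.cast_choose ℚ (by omega), show 2*j+2*i+d+1 - (d+1) = 2*j+2*i by omega]
  have c2 : ((2*j+2*i).choose i : ℚ)
      = ((2*j+2*i).factorial : ℚ) / (i.factorial * ((2*j+i).factorial)) := by
    rw [Nat.cast_choose ℚ (by omega), show 2*j+2*i - i = 2*j+i by omega]
  have c3 : (((i+d+1).choose i : ℚ))
      = ((i+d+1).factorial : ℚ) / (i.factorial * ((d+1).factorial)) := by
    rw [Nat.cast_choose ℚ (by omega), show i+d+1 - i = d+1 by omega]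
  have c4 : ((2*j+2*i+d+1).choose (i+d+1) : ℚ)
      = ((2*j+2*i+d+1).factorial : ℚ) / ((i+d+1).factorial * ((2*j+i).factorial)) := by
    rw [Nat.cast_choose ℚ (by omega), show 2*j+2*i+d+1 - (i+d+1) = 2*j+i by omega]
  have c5 : (((i+d).choose i : ℚ)) = ((i+d).factorial : ℚ) / (i.factorial * d.factorial) := by
    rw [Nat.cast_choose ℚ (by omega), show i+d - i = d by omega]
  have c6 : ((2*j+2*i+d).choose (i+d) : ℚ)
      = ((2*j+2*i+d).factorial : ℚ) / ((i+d).factorial * ((2*j+i).factorial)) := by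
    rw [Nat.cast_choose ℚ (by omega), show 2*j+2*i+d - (i+d) = 2*j+i by omega]
  have f1 : ((2*j+2*i+d+1).factorial : ℚ) = (2*(j:ℚ)+2*i+d+1) * ((2*j+2*i+d).factorial : ℚ) := by
    rw [show 2*j+2*i+d+1 = (2*j+2*i+d)+1 by ring, Nat.factorial_succ]; push_cast; ring
  have f2 : ((d+1).factorial : ℚ) = ((d:ℚ)+1) * (d.factorial : ℚ) := by
    rw [Nat.factorial_succ]; push_cast; ring
  have f3 : ((i+d+1).factorial : ℚ) = ((i:ℚ)+d+1) * ((i+d).factorial : ℚ) := by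
    rw [show i+d+1 = (i+d)+1 by ring, Nat.factorial_succ]; push_cast; ring
  rw [c1, c2, c3, c4, c5, c6, f1, f2, f3]
  have n1 : ((2*j+2*i+d).factorial : ℚ) ≠ 0 := by exact_mod_cast Nat.factorial_ne_zero _
  have n2 : ((2*j+2*i).factorial : ℚ) ≠ 0 := by exact_mod_cast Nat.factorial_ne_zero _
  have n3 : ((2*j+i).factorial : ℚ) ≠ 0 := by exact_mod_cast Nat.factorial_ne_zero _
  have n4 : ((i+d).factorial : ℚ) ≠ 0 := by exact_mod_cast Nat.factorial_ne_zero _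
  have n5 : (i.factorial : ℚ) ≠ 0 := by exact_mod_cast Nat.factorial_ne_zero _
  have n6 : (d.factorial : ℚ) ≠ 0 := by exact_mod_cast Nat.factorial_ne_zero _
  have n7 : ((d:ℚ)+1) ≠ 0 := by positivity
  have n8 : ((i:ℚ)+d+1) ≠ 0 := by positivity
  field_simp
  ring

lemma keyN (j m i : ℕ) (hm : 1 ≤ m) (hi : i ≤ m) :
    2*(j+m) * ((2*j+m+i).choose (m-i)) * ((2*j+2*i).choose i)
    = (2*j+m+i) * ((m.choose i) * ((m+2*j+i).choose m)
        + ((m-1).choose i) * ((m+2*j+i-1).choose (m-1))) := by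
  rcases Nat.lt_or_ge i m with him | him
  · obtain ⟨d, rfl⟩ : ∃ d, m = i + d + 1 := ⟨m - i - 1, by omega⟩
    rw [show i+d+1 - i = d+1 by omega, show i+d+1-1 = i+d by omega,
      show (i+d+1)+2*j+i-1 = 2*j+2*i+d by omega,
      show 2*j+(i+d+1)+i = 2*j+2*i+d+1 by ring,
      show (i+d+1)+2*j+i = 2*j+2*i+d+1 by ring]
    have h := keyQ j i d
    have h' : (2*(j+(i+d+1)) * ((2*j+2*i+d+1).choose (d+1)) * ((2*j+2*i).choose i) : ℚ)
        = ((2*j+2*i+d+1) * (((i+d+1).choose i) * ((2*j+2*i+d+1).choose (i+d+1))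
            + ((i+d).choose i) * ((2*j+2*i+d).choose (i+d))) : ℚ) := by
      linear_combination h
    exact_mod_cast h'
  · have : i = m := by omega
    subst this
    rw [Nat.sub_self, Nat.choose_zero_right, Nat.choose_self,
      Nat.choose_eq_zero_of_lt (show i-1 < i by omega), Nat.mul_one,
      Nat.zero_mul, Nat.add_zero, Nat.one_mul]
    rw [show 2*j+i+i = i+2*j+i by ring, show 2*(j+i) = i+2*j+i by ring,
      show 2*j+2*i = i+2*j+i by ring]

theorem stmt14 (j n : ℕ) (hj : 1 ≤ j) (hjn : j ≤ n) (v : ℂ) :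
    ∑ k ∈ Finset.Icc j n, (-1 : ℂ) ^ (k + n) * (2 * n / ((n : ℂ) + k)) *
        ((n + k).choose (n - k) : ℂ) * ((2 * k).choose (k - j) : ℂ) * v ^ k =
      v ^ j * (Jac 0 (2 * j) (n - j) (2 * v - 1) -
        (if j < n then Jac 0 (2 * j) (n - 1 - j) (2 * v - 1) else 0)) := by
  obtain ⟨m, rfl⟩ : ∃ m, n = j + m := ⟨n - j, by omega⟩
  rw [show j + m - j = m by omega]
  by_cases hlt : j < j + m
  · -- main case : m ≥ 1
    have hm : 1 ≤ m := by omega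
    rw [if_pos hlt, show j + m - 1 - j = m - 1 by omega,
      jac_coeff j m v, jac_coeff j (m-1) v]
    -- extend the second sum to range (m+1)
    have hext : ∑ i ∈ Finset.range ((m-1)+1),
        (-1:ℂ)^((m-1)+i) * ((m-1).choose i) * (((m-1)+2*j+i).choose (m-1)) * v^i
        = ∑ i ∈ Finset.range (m+1),
        (-1:ℂ)^((m-1)+i) * ((m-1).choose i) * (((m-1)+2*j+i).choose (m-1)) * v^i := by
      apply Finset.sum_subset
      · intro x hx; simp only [Finset.mem_range] at hx ⊢; omega
      · intro x _ hx
        have : m - 1 < x := by simp only [Finset.mem_range, not_lt] at hx; omega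
        simp [Nat.choose_eq_zero_of_lt this]
    rw [hext, ← Finset.sum_sub_distrib, Finset.mul_sum]
    rw [← Finset.Ico_add_one_right_eq_Icc, Finset.sum_Ico_eq_sum_range,
      show j + m + 1 - j = m + 1 by omega]
    refine Finset.sum_congr rfl fun i hi => ?_
    have him : i ≤ m := by simpa [Nat.lt_succ_iff] using Finset.mem_range.mp hi
    -- rewrite nat choose arguments
    have hch1 : (j + m + (j + i)).choose (j + m - (j + i)) = (2*j+m+i).choose (m-i) := by
      congr 1 <;> omega
    have hch2 : (2 * (j + i)).choose (j + i - j) = (2*j+2*i).choose i := by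
      congr 1 <;> omega
    rw [hch1, hch2]
    -- sign
    have hsgn : (-1:ℂ)^((j+i) + (j+m)) = (-1:ℂ)^(m+i) := by
      rw [show (j+i)+(j+m) = 2*j + (m+i) by ring, pow_add, pow_mul]
      norm_num
    rw [hsgn]
    -- cast denominators
    have hden : ((j+m : ℕ) : ℂ) + ((j+i : ℕ) : ℂ) = ((2*j+m+i : ℕ) : ℂ) := by
      push_cast; ring
    rw [hden]
    have hne : ((2*j+m+i : ℕ) : ℂ) ≠ 0 := Nat.cast_ne_zero.mpr (by omega)
    -- key identity cast to ℂ
    have hkey : (2*((j:ℂ)+m)) * ((2*j+m+i).choose (m-i) : ℂ) * ((2*j+2*i).choose i : ℂ)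
        = ((2*j+m+i : ℕ) : ℂ) * ((m.choose i : ℂ) * ((m+2*j+i).choose m : ℂ)
            + (((m-1).choose i : ℂ)) * (((m+2*j+i-1).choose (m-1) : ℂ))) := by
      have := congrArg (Nat.cast : ℕ → ℂ) (keyN j m i hm him)
      push_cast at this
      push_cast
      linear_combination this
    -- combine signs on RHS
    have hsgn2 : (-1:ℂ)^(m+i) - 0 = (-1:ℂ)^(m+i) := by ring
    have harg : (m-1) + 2*j + i = m + 2*j + i - 1 := by omega
    rw [harg]
    have hm1 : (-1:ℂ)^((m-1)+i) = -(-1:ℂ)^(m+i) := by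
      rw [show m + i = ((m-1)+i)+1 by omega, pow_succ]; ring
    rw [hm1]
    have hvpow : v^(j+i) = v^j * v^i := by rw [pow_add]
    rw [hvpow]
    have h2n : (2 * ((j:ℂ)+m) / ((2*j+m+i : ℕ) : ℂ)) * ((2*j+m+i).choose (m-i) : ℂ)
        * ((2*j+2*i).choose i : ℂ)
        = ((m.choose i : ℂ) * ((m+2*j+i).choose m : ℂ)
            + (((m-1).choose i : ℂ)) * (((m+2*j+i-1).choose (m-1) : ℂ))) := by
      rw [div_mul_eq_mul_div, div_mul_eq_mul_div, div_eq_iff hne]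
      linear_combination hkey
    push_cast
    push_cast at h2n
    linear_combination ((-1:ℂ)^(m+i) * v^j * v^i) * h2n
  · -- j = n case : m = 0
    have hm0 : m = 0 := by omega
    subst hm0
    rw [if_neg hlt, jac_coeff j 0 v]
    simp only [Nat.add_zero, zero_add, Finset.range_one, Finset.sum_singleton, pow_zero,
      Nat.choose_self, Nat.choose_zero_right, Nat.cast_one, mul_one, one_mul, sub_zero,
      Nat.sub_self]
    rw [Finset.Icc_self, Finset.sum_singleton]
    have h1 : (-1:ℂ)^(j+j) = 1 := by
      rw [show j + j = 2*j by ring, pow_mul]; norm_num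
    rw [h1, Nat.sub_self, Nat.choose_zero_right, Nat.choose_zero_right]
    have hne : ((j:ℂ) + j) ≠ 0 := by
      have h2 : ((j:ℂ)+j) = ((2*j : ℕ) : ℂ) := by push_cast; ring
      rw [h2]; exact Nat.cast_ne_zero.mpr (by omega)
    rw [Nat.cast_one]
    field_simp
    have hj0 : (j:ℂ) ≠ 0 := by exact_mod_cast (show j ≠ 0 by omega)
    rw [div_eq_iff hj0]; ring
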